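/- Let (R, m, k) be a regular local ring of Krull dimension 4 with regular system of parameters x, y, z, t, and let f₁ = yz − xt, f₂ = z³ − x⁵, f₃ = z²t − x⁴y, f₄ = zt² − x³y², f₅ = t³ − x²y³, f₆ = y⁴ − x⁵, f₇ = y³t − x⁴z, f₈ = y²t² − x³z². Then f₈ does not belong to the ideal H = (f₁, f₂, f₃, f₄, f₅, f₆, f₇). -/

import Mathlib

lemma myArtVS {B : Type*} [CommRing B] {I : Ideal B} (hI : I.IsMaximal)
    (M : Type*) [AddCommGroup M] [Module B M] [Module.Finite B M]
    (htor : ∀ a ∈ I, ∀ x : M, a • x = 0) : IsArtinian B M := by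
  have htor' : Module.IsTorsionBySet B M I := fun x a => htor a.1 a.2 x
  letI : Module (B ⧸ I) M := htor'.module
  haveI : IsScalarTower B (B ⧸ I) M := htor'.isScalarTower (S := B)
  haveI : Module.Finite (B ⧸ I) M := Module.Finite.of_restrictScalars_finite B (B ⧸ I) M
  letI : Field (B ⧸ I) := Ideal.Quotient.field I
  haveI : IsArtinianRing (B ⧸ I) := inferInstance
  haveI hart : IsArtinian (B ⧸ I) M := isArtinian_of_fg_of_artinian'
  let F : Submodule B M → Submodule (B ⧸ I) M := fun N =>
    { toAddSubmonoid := N.toAddSubmonoid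
      smul_mem' := by
        rintro c x hx
        obtain ⟨b, rfl⟩ := Ideal.Quotient.mk_surjective c
        show ((Ideal.Quotient.mk I b) • x) ∈ N
        rw [htor'.mk_smul]
        exact N.smul_mem b hx }
  have hmono : StrictMono F := by
    intro N N' h
    refine lt_of_le_of_ne (fun a ha => h.le ha) (fun he => h.ne ?_)
    have : ∀ a : M, a ∈ N ↔ a ∈ N' := by
      intro a
      constructor
      · intro ha
        have : a ∈ F N' := he ▸ (ha : a ∈ F N)
        exact this
      · intro ha
        have : a ∈ F N := he.symm ▸ (ha : a ∈ F N')
        exact this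
    exact Submodule.ext this
  exact hmono.wellFoundedLT

lemma myArtin {B : Type*} [CommRing B] [IsNoetherianRing B] [IsLocalRing B] {k : ℕ}
    (hk : (IsLocalRing.maximalIdeal B) ^ k = ⊥) : IsArtinianRing B := by
  set m := IsLocalRing.maximalIdeal B with hm
  have key : ∀ i : ℕ, IsArtinian B (B ⧸ (m ^ i : Ideal B)) := by
    intro i
    induction i with
    | zero =>
      have : Subsingleton (B ⧸ (m ^ 0 : Ideal B)) := by
        rw [pow_zero, Ideal.one_eq_top]
        exact Submodule.Quotient.subsingleton_iff.mpr rfl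
      infer_instance
    | succ i ih =>
      set N : Submodule B (B ⧸ (m ^ (i+1) : Ideal B)) :=
        Submodule.map (m ^ (i+1) : Ideal B).mkQ (m ^ i : Ideal B) with hN
      have hle : (m ^ (i+1) : Ideal B) ≤ (m ^ i : Ideal B) :=
        Ideal.pow_le_pow_right (Nat.le_succ i)
      haveI h1 : IsArtinian B N := by
        haveI : Module.Finite B N := by
          rw [Module.Finite.iff_fg]
          exact IsNoetherian.noetherian N
        refine myArtVS (IsLocalRing.maximalIdeal.isMaximal B) N ?_
        rintro a ha ⟨x, hx⟩
        obtain ⟨y, hy, rfl⟩ := hx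
        apply Subtype.ext
        show a • (m ^ (i+1) : Ideal B).mkQ y = 0
        rw [← map_smul, Submodule.mkQ_apply, Submodule.Quotient.mk_eq_zero]
        have : a • y = a * y := rfl
        rw [this, pow_succ, mul_comm a y]
        exact Ideal.mul_mem_mul hy ha
      haveI h2 : IsArtinian B ((B ⧸ (m ^ (i+1) : Ideal B)) ⧸ N) := by
        have e := Submodule.quotientQuotientEquivQuotient (m ^ (i+1) : Ideal B) (m ^ i) hle
        exact isArtinian_of_linearEquiv e.symm
      exact isArtinian_of_range_eq_ker N.subtype N.mkQ
        (by rw [Submodule.range_subtype, Submodule.ker_mkQ])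
  have h := key k
  rw [hk] at h
  have e := Submodule.quotEquivOfEqBot (⊥ : Submodule B B) rfl
  exact isArtinianRing_iff.mpr (isArtinian_of_linearEquiv e)

lemma myDomainQ {B : Type*} [CommRing B] [IsNoetherianRing B] [IsLocalRing B] (π : B)
    (hπ : IsLocalRing.maximalIdeal B = Ideal.span {π}) (hnn : ∀ n : ℕ, π ^ n ≠ 0) :
    IsDomain B := by
  have hspan_ne : Ideal.span {π} ≠ ⊤ := by
    rw [← hπ]; exact (IsLocalRing.maximalIdeal.isMaximal B).ne_top
  have hKrull : (⨅ i : ℕ, Ideal.span {π} ^ i) = ⊥ :=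
    Ideal.iInf_pow_eq_bot_of_isLocalRing (Ideal.span {π}) hspan_ne
  have fact : ∀ b : B, b ≠ 0 → ∃ (n : ℕ) (c : B), IsUnit c ∧ b = c * π ^ n := by
    intro b hb
    have hex : ∃ n : ℕ, b ∉ Ideal.span {π} ^ (n + 1) := by
      by_contra hcon
      push_neg at hcon
      apply hb
      have : b ∈ ⨅ i : ℕ, Ideal.span {π} ^ i := by
        rw [Ideal.mem_iInf]
        intro i
        cases i with
        | zero => rw [pow_zero, Ideal.one_eq_top]; trivial
        | succ j => exact hcon j
      rwa [hKrull, Ideal.mem_bot] at this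
    classical
    let n := Nat.find hex
    have hn1 : b ∉ Ideal.span {π} ^ (n + 1) := Nat.find_spec hex
    have hn0 : b ∈ Ideal.span {π} ^ n := by
      rcases Nat.eq_zero_or_pos n with h0 | hpos
      · rw [h0, pow_zero, Ideal.one_eq_top]; trivial
      · have h := Nat.find_min hex (Nat.sub_lt hpos one_pos)
        rw [Nat.sub_add_cancel (show 1 ≤ Nat.find hex from hpos)] at h
        exact not_not.mp h
    rw [Ideal.span_singleton_pow, Ideal.mem_span_singleton'] at hn0
    obtain ⟨c, hc⟩ := hn0
    refine ⟨n, c, ?_, hc.symm⟩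
    by_contra hcu
    apply hn1
    have hcm : c ∈ IsLocalRing.maximalIdeal B := hcu
    rw [hπ, Ideal.mem_span_singleton'] at hcm
    obtain ⟨d, hd⟩ := hcm
    rw [Ideal.span_singleton_pow, Ideal.mem_span_singleton']
    exact ⟨d, by rw [← hc, ← hd]; ring⟩
  haveI : NoZeroDivisors B := by
    constructor
    intro a b hab
    by_contra hcon
    push_neg at hcon
    obtain ⟨ha, hb⟩ := hcon
    obtain ⟨n, c, hc, rfl⟩ := fact a ha
    obtain ⟨n', c', hc', rfl⟩ := fact b hb
    have : (c * c') * π ^ (n + n') = 0 := by rw [← hab]; ring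
    have h0 : π ^ (n + n') = 0 := by
      have := (hc.mul hc').mul_right_eq_zero.mp this
      exact this
    exact hnn _ h0
  exact NoZeroDivisors.to_isDomain B

-- maximal ideal of quotient of local ring
lemma myMaxQuot {A : Type*} [CommRing A] [IsLocalRing A] (I : Ideal A) (hI : I ≠ ⊤) :
    letI : IsLocalRing (A ⧸ I) :=
      haveI : Nontrivial (A ⧸ I) := Ideal.Quotient.nontrivial_iff.mpr hI
      IsLocalRing.of_surjective' (Ideal.Quotient.mk I) Ideal.Quotient.mk_surjective
    IsLocalRing.maximalIdeal (A ⧸ I) = (IsLocalRing.maximalIdeal A).map (Ideal.Quotient.mk I) := by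
  haveI : Nontrivial (A ⧸ I) := Ideal.Quotient.nontrivial_iff.mpr hI
  haveI : IsLocalRing (A ⧸ I) :=
    IsLocalRing.of_surjective' (Ideal.Quotient.mk I) Ideal.Quotient.mk_surjective
  apply le_antisymm
  · intro xb hxb
    obtain ⟨b, rfl⟩ := Ideal.Quotient.mk_surjective xb
    have hb : b ∈ IsLocalRing.maximalIdeal A := by
      rw [IsLocalRing.mem_maximalIdeal] at hxb ⊢
      intro hu
      exact hxb (hu.map (Ideal.Quotient.mk I))
    exact Ideal.mem_map_of_mem _ hb
  · rw [Ideal.map_le_iff_le_comap]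
    intro b hb
    rw [Ideal.mem_comap, IsLocalRing.mem_maximalIdeal, mem_nonunits_iff]
    intro hu
    obtain ⟨c, hc⟩ := IsUnit.exists_right_inv hu
    obtain ⟨d, rfl⟩ := Ideal.Quotient.mk_surjective c
    rw [← map_mul, ← map_one (Ideal.Quotient.mk I), Ideal.Quotient.mk_eq_mk_iff_sub_mem] at hc
    have h1 : (1 : A) ∈ IsLocalRing.maximalIdeal A := by
      have hbd : b * d ∈ IsLocalRing.maximalIdeal A := Ideal.mul_mem_right d _ hb
      have hsub : b * d - 1 ∈ IsLocalRing.maximalIdeal A :=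
        IsLocalRing.le_maximalIdeal hI hc
      have := Ideal.sub_mem _ hbd hsub
      simpa using this
    exact (IsLocalRing.maximalIdeal.isMaximal A).ne_top (Ideal.eq_top_of_isUnit_mem _ h1 isUnit_one)

theorem myPITlocal {A : Type*} [CommRing A] [IsNoetherianRing A] [IsLocalRing A]
    (a : A) (ha : a ∈ IsLocalRing.maximalIdeal A)
    (hmin : ∀ P : Ideal A, P.IsPrime → a ∈ P → P = IsLocalRing.maximalIdeal A)
    (q' q : Ideal A) (hq' : q'.IsPrime) (hq : q.IsPrime)
    (h1 : q' < q) (h2 : q < IsLocalRing.maximalIdeal A) : False := by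
  -- a ∉ q
  have haq : a ∉ q := fun h => h2.ne (hmin q hq h)
  -- m ^ k ≤ span {a}
  have hrad : IsLocalRing.maximalIdeal A ≤ (Ideal.span {a}).radical := by
    rw [Ideal.radical_eq_sInf]
    apply le_sInf
    rintro P ⟨hle, hP⟩
    exact (hmin P hP (hle (Ideal.subset_span rfl))).ge
  obtain ⟨k, hk⟩ : ∃ k, (IsLocalRing.maximalIdeal A) ^ k ≤ Ideal.span {a} :=
    Ideal.exists_pow_le_of_le_radical_of_fg hrad (IsNoetherian.noetherian _)
  have hane : Ideal.span {a} ≠ ⊤ := fun h =>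
    (IsLocalRing.maximalIdeal.isMaximal A).ne_top
      (top_le_iff.mp (h ▸ Ideal.span_le.mpr (Set.singleton_subset_iff.mpr ha)))
  -- quotient ring is artinian
  haveI : Nontrivial (A ⧸ Ideal.span {a}) := Ideal.Quotient.nontrivial_iff.mpr hane
  haveI : IsLocalRing (A ⧸ Ideal.span {a}) :=
    IsLocalRing.of_surjective' (Ideal.Quotient.mk _) Ideal.Quotient.mk_surjective
  haveI : IsArtinianRing (A ⧸ Ideal.span {a}) := by
    apply myArtin (k := k)
    rw [myMaxQuot (Ideal.span {a}) hane, ← Ideal.map_pow]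
    apply le_bot_iff.mp
    rw [← Ideal.map_quotient_self (Ideal.span {a})]
    exact Ideal.map_mono hk
  -- symbolic powers
  let L := Localization.AtPrime q
  let φ := algebraMap A L
  let S : ℕ → Ideal A := fun n => Ideal.comap φ ((Ideal.map φ q) ^ n)
  have hSanti : ∀ n, S (n + 1) ≤ S n := fun n =>
    Ideal.comap_mono (Ideal.pow_le_pow_right (Nat.le_succ n))
  -- stabilization
  let g : ℕ →o (Ideal (A ⧸ Ideal.span {a}))ᵒᵈ :=
    ⟨fun n => (S n).map (Ideal.Quotient.mk (Ideal.span {a})),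
     fun n m hnm => by
       dsimp
       apply Ideal.map_mono
       induction hnm with
       | refl => exact le_rfl
       | step _ ih => exact le_trans (hSanti _) ih⟩
  obtain ⟨n, hn⟩ := IsArtinian.monotone_stabilizes g
  have hstep : S n ≤ S (n + 1) ⊔ Ideal.span {a} • S n := by
    intro s hs
    have hmem : Ideal.Quotient.mk (Ideal.span {a}) s ∈ (S (n+1)).map (Ideal.Quotient.mk _) := by
      have h' : g n = g (n+1) := hn (n+1) (Nat.le_succ n)
      have h'' : (S n).map (Ideal.Quotient.mk (Ideal.span {a})) =
          (S (n+1)).map (Ideal.Quotient.mk (Ideal.span {a})) := h'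
      rw [← h'']
      exact Ideal.mem_map_of_mem _ hs
    rw [Ideal.mem_map_iff_of_surjective _ Ideal.Quotient.mk_surjective] at hmem
    obtain ⟨s', hs', he⟩ := hmem
    have hdiff : s - s' ∈ Ideal.span {a} :=
      (Ideal.Quotient.mk_eq_mk_iff_sub_mem s s').mp he.symm
    obtain ⟨r, hr⟩ := Ideal.mem_span_singleton'.mp hdiff
    -- r ∈ S n
    have hra : r * a ∈ S n := by
      rw [hr]
      exact Ideal.sub_mem _ hs (hSanti n hs')
    have hrS : r ∈ S n := by
      have hu : IsUnit (φ a) := IsLocalization.map_units L (⟨a, haq⟩ : q.primeCompl)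
      have : φ r * φ a ∈ (Ideal.map φ q) ^ n := by
        rw [← map_mul]; exact hra
      obtain ⟨u, hu'⟩ := hu
      have : φ r ∈ (Ideal.map φ q) ^ n := by
        have h3 := Ideal.mul_mem_right (↑u⁻¹) _ this
        rwa [mul_assoc, ← hu', Units.mul_inv, mul_one] at h3
      exact this
    have : s = s' + r * a := by rw [hr]; ring
    rw [this]
    refine Submodule.add_mem _ (Ideal.mem_sup_left hs') (Ideal.mem_sup_right ?_)
    rw [Ideal.smul_eq_mul, mul_comm]
    exact Ideal.mul_mem_mul hrS (Ideal.subset_span rfl)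
  -- Nakayama in A
  have hSeq : S n = S (n + 1) := by
    apply le_antisymm ?_ (hSanti n)
    apply Submodule.le_of_le_smul_of_le_jacobson_bot (IsNoetherian.noetherian _) ?_ hstep
    rw [IsLocalRing.jacobson_eq_maximalIdeal (⊥ : Ideal A) bot_ne_top]
    exact Ideal.span_le.mpr (Set.singleton_subset_iff.mpr ha)
  -- push to localization
  haveI : IsNoetherianRing L := IsLocalization.isNoetherianRing q.primeCompl L inferInstance
  have hmc : ∀ m : ℕ, Ideal.map φ (S m) = (Ideal.map φ q) ^ m := fun m =>
    IsLocalization.map_comap q.primeCompl L ((Ideal.map φ q) ^ m)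
  have hpow : (Ideal.map φ q) ^ n = (Ideal.map φ q) ^ (n + 1) := by
    rw [← hmc n, ← hmc (n+1), hSeq]
  have hbot : (Ideal.map φ q) ^ n = ⊥ := by
    apply Submodule.eq_bot_of_le_smul_of_le_jacobson_bot (Ideal.map φ q) _
      (IsNoetherian.noetherian _)
    · rw [Ideal.smul_eq_mul, ← pow_succ']
      exact le_of_eq hpow
    · rw [IsLocalRing.jacobson_eq_maximalIdeal (⊥ : Ideal L) bot_ne_top]
      exact le_of_eq Localization.AtPrime.map_eq_maximalIdeal
  -- conclude
  obtain ⟨s, hsq, hsq'⟩ := SetLike.exists_of_lt h1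
  have : φ s ^ n = 0 := by
    have h4 : φ s ∈ Ideal.map φ q := Ideal.mem_map_of_mem _ hsq
    have h5 : (φ s) ^ n ∈ (Ideal.map φ q) ^ n := Ideal.pow_mem_pow h4 n
    rw [hbot] at h5
    simpa using h5
  rw [← map_pow] at this
  rw [IsLocalization.map_eq_zero_iff q.primeCompl] at this
  obtain ⟨c, hc⟩ := this
  have hcq' : (c : A) * s ^ n ∈ q' := by rw [hc]; exact Submodule.zero_mem _
  rcases hq'.mul_mem_iff_mem_or_mem.mp hcq' with h | h
  · exact c.2 (h1.le h)
  · exact hsq' (hq'.mem_of_pow_mem n h)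

-- relative PIT: if w is minimal over u + (a) and there is a chain u < v < w, contradiction
theorem myPITrel {R : Type*} [CommRing R] [IsNoetherianRing R]
    (u v w : Ideal R) (hu : u.IsPrime) (hv : v.IsPrime) (hw : w.IsPrime)
    (huv : u < v) (hvw : v < w) (a : R) (haw : a ∈ w)
    (hmin : ∀ P : Ideal R, P.IsPrime → u ≤ P → a ∈ P → P ≤ w → P = w) : False := by
  -- pass to R/u
  let Q := R ⧸ u
  let mk : R →+* Q := Ideal.Quotient.mk u
  haveI : IsDomain Q := Ideal.Quotient.isDomain u
  let vb : Ideal Q := v.map mk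
  let wb : Ideal Q := w.map mk
  have hker : RingHom.ker mk = u := Ideal.mk_ker
  have hvb : vb.IsPrime := Ideal.map_isPrime_of_surjective Ideal.Quotient.mk_surjective
    (by rw [hker]; exact huv.le)
  have hwb : wb.IsPrime := Ideal.map_isPrime_of_surjective Ideal.Quotient.mk_surjective
    (by rw [hker]; exact (huv.trans hvw).le)
  have hcomap_bot : Ideal.comap mk ⊥ ≤ u := by
    intro r hr
    have h0 : mk r = 0 := hr
    rwa [Ideal.Quotient.eq_zero_iff_mem] at h0
  have hcomap_vb : vb.comap mk = v := by
    rw [Ideal.comap_map_of_surjective mk Ideal.Quotient.mk_surjective]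
    exact sup_eq_left.mpr (hcomap_bot.trans huv.le)
  have hcomap_wb : wb.comap mk = w := by
    rw [Ideal.comap_map_of_surjective mk Ideal.Quotient.mk_surjective]
    exact sup_eq_left.mpr (hcomap_bot.trans (huv.trans hvw).le)
  have hvbwb : vb < wb := by
    refine lt_of_le_of_ne (Ideal.map_mono hvw.le) (fun he => hvw.ne ?_)
    rw [← hcomap_vb, ← hcomap_wb, he]
  -- localize at wb
  haveI := hwb
  let L := Localization.AtPrime wb
  let ψ := algebraMap Q L
  haveI : IsNoetherianRing Q := inferInstance
  haveI : IsNoetherianRing L := IsLocalization.isNoetherianRing wb.primeCompl L inferInstance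
  have hcompl : wb.primeCompl ≤ nonZeroDivisors Q := by
    intro c hc
    have hcw : c ∉ wb := hc
    exact mem_nonZeroDivisors_of_ne_zero (fun h0 => hcw (h0 ▸ wb.zero_mem))
  haveI : IsDomain L := IsLocalization.isDomain_of_le_nonZeroDivisors L hcompl
  -- the element
  have hma : ψ (mk a) ∈ IsLocalRing.maximalIdeal L := by
    rw [← Localization.AtPrime.map_eq_maximalIdeal]
    exact Ideal.mem_map_of_mem _ (Ideal.mem_map_of_mem _ haw)
  -- hmin transfer
  have hminL : ∀ P : Ideal L, P.IsPrime → ψ (mk a) ∈ P → P = IsLocalRing.maximalIdeal L := by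
    intro P hP hmemP
    have hPle : P.comap ψ ≤ wb := by
      intro c hc
      by_contra hcw
      have : IsUnit (ψ c) := IsLocalization.map_units L (⟨c, hcw⟩ : wb.primeCompl)
      exact hP.ne_top (Ideal.eq_top_of_isUnit_mem _ hc this)
    -- comap to R
    haveI := hP
    have hP1 : (P.comap ψ).IsPrime := Ideal.IsPrime.comap ψ
    haveI := hP1
    have hP2 : ((P.comap ψ).comap mk).IsPrime := Ideal.IsPrime.comap mk
    have h1 : u ≤ (P.comap ψ).comap mk := by
      intro r hr
      have : mk r = 0 := by rwa [← RingHom.mem_ker, hker]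
      show mk r ∈ P.comap ψ
      rw [this]
      exact Submodule.zero_mem _
    have h2 : a ∈ (P.comap ψ).comap mk := hmemP
    have h3 : (P.comap ψ).comap mk ≤ w := by
      rw [← hcomap_wb]
      exact Ideal.comap_mono hPle
    have h4 := hmin _ hP2 h1 h2 h3
    -- so comap ψ P = wb
    have h5 : P.comap ψ = wb := by
      have := congrArg (Ideal.map mk) h4
      rwa [Ideal.map_comap_of_surjective mk Ideal.Quotient.mk_surjective] at this
    rw [← IsLocalization.map_comap wb.primeCompl L P, Ideal.under_def, h5,
      Localization.AtPrime.map_eq_maximalIdeal]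
  -- chain in L
  have hdisj : Disjoint (wb.primeCompl : Set Q) (vb : Set Q) :=
    Set.disjoint_left.mpr (fun c hc hcv => hc (hvbwb.le hcv))
  haveI hJprime : (vb.map ψ).IsPrime :=
    IsLocalization.isPrime_of_isPrime_disjoint wb.primeCompl L vb hvb hdisj
  have hinj : Function.Injective ψ := IsLocalization.injective L hcompl
  have hbotJ : (⊥ : Ideal L) < vb.map ψ := by
    refine lt_of_le_of_ne bot_le (fun he => ?_)
    have : vb ≤ ⊥ := by
      intro c hc
      have : ψ c ∈ vb.map ψ := Ideal.mem_map_of_mem _ hc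
      rw [← he] at this
      have : ψ c = 0 := this
      rw [Ideal.mem_bot]
      exact hinj (by rwa [map_zero])
    have : vb = ⊥ := le_bot_iff.mp this
    -- but u < v means vb ≠ ⊥
    obtain ⟨r, hrv, hru⟩ := SetLike.exists_of_lt huv
    have : mk r ∈ vb := Ideal.mem_map_of_mem _ hrv
    rw [‹vb = ⊥›, Ideal.mem_bot] at this
    exact hru (by rwa [← hker, RingHom.mem_ker])
  have hJmax : vb.map ψ < IsLocalRing.maximalIdeal L := by
    rw [← Localization.AtPrime.map_eq_maximalIdeal]
    refine lt_of_le_of_ne (Ideal.map_mono hvbwb.le) (fun he => hvbwb.ne ?_)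
    have h6 := IsLocalization.comap_map_of_isPrime_disjoint wb.primeCompl L hvb hdisj
    have h7 := IsLocalization.comap_map_of_isPrime_disjoint wb.primeCompl L hwb
      (Set.disjoint_left.mpr (fun c hc hcv => hc hcv))
    rw [Ideal.under_def] at h6 h7
    have h9 := congrArg (Ideal.comap ψ) he
    rw [h6, h7] at h9
    exact h9
  exact myPITlocal (ψ (mk a)) hma hminL ⊥ (vb.map ψ) Ideal.bot_prime hJprime hbotJ hJmax

-- chain surgery
theorem myShift {R : Type*} [CommRing R] [IsNoetherianRing R]
    (u v w : Ideal R) (hu : u.IsPrime) (hv : v.IsPrime) (hw : w.IsPrime)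
    (huv : u < v) (hvw : v < w) (a : R) (haw : a ∈ w) :
    ∃ v' : Ideal R, v'.IsPrime ∧ a ∈ v' ∧ u < v' ∧ v' < w := by
  by_cases hav : a ∈ v
  · exact ⟨v, hv, hav, huv, hvw⟩
  · obtain ⟨p, hp, hpw⟩ := Ideal.exists_minimalPrimes_le
      (show u ⊔ Ideal.span {a} ≤ w from
        sup_le (huv.trans hvw).le (Ideal.span_le.mpr (Set.singleton_subset_iff.mpr haw)))
    obtain ⟨⟨hpprime, hple⟩, hpmin⟩ := hp
    have hap : a ∈ p := hple (Ideal.mem_sup_right (Ideal.subset_span rfl))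
    have hup : u < p := by
      refine lt_of_le_of_ne (le_sup_left.trans hple) (fun he => ?_)
      exact hav (huv.le (he ▸ hap))
    have hpww : p < w := by
      refine lt_of_le_of_ne hpw (fun he => ?_)
      -- w minimal over u ⊔ span a: contradiction via myPITrel
      refine myPITrel u v w hu hv hw huv hvw a haw ?_
      intro P hP huP haP hPw
      have : u ⊔ Ideal.span {a} ≤ P :=
        sup_le huP (Ideal.span_le.mpr (Set.singleton_subset_iff.mpr haP))
      have h8 : p ≤ P := hpmin ⟨hP, this⟩ (by rw [he]; exact hPw)
      exact le_antisymm hPw (by rw [← he]; exact h8)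
    exact ⟨p, hpprime, hap, hup, hpww⟩

theorem myFinal {D : Type*} [CommRing D] [IsNoetherianRing D] [IsLocalRing D] [IsDomain D]
    (Y T A B C : D) (hmD : IsLocalRing.maximalIdeal D = Ideal.span {Y, T})
    (Q : Ideal D) (hQ : Q.IsPrime) (h0Q : ⊥ < Q) (hQm : Q < IsLocalRing.maximalIdeal D)
    (E : Y^2*T^2 = A*T^3 + B*Y^4 + C*(Y^3*T)) : False := by
  have hYm : Y ∈ IsLocalRing.maximalIdeal D := by
    rw [hmD]; exact Ideal.subset_span (Set.mem_insert _ _)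
  have hTm : T ∈ IsLocalRing.maximalIdeal D := by
    rw [hmD]; exact Ideal.subset_span (Set.mem_insert_of_mem _ rfl)
  have NP : ∀ g : D, g ∈ IsLocalRing.maximalIdeal D →
      IsLocalRing.maximalIdeal D ≤ Ideal.span {g} → False := by
    intro g hg hle
    refine myPITlocal g hg ?_ ⊥ Q Ideal.bot_prime hQ h0Q hQm
    intro P hP hgP
    refine le_antisymm (IsLocalRing.le_maximalIdeal hP.ne_top) ?_
    exact hle.trans (Ideal.span_le.mpr (Set.singleton_subset_iff.mpr hgP))
  have hY0 : Y ≠ 0 := by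
    intro h0
    refine NP T hTm ?_
    rw [hmD, Ideal.span_le]
    rintro c (rfl | rfl)
    · rw [h0]; exact Submodule.zero_mem _
    · exact Ideal.subset_span rfl
  have hT0 : T ≠ 0 := by
    intro h0
    refine NP Y hYm ?_
    rw [hmD, Ideal.span_le]
    rintro c (rfl | rfl)
    · exact Ideal.subset_span rfl
    · rw [h0]; exact Submodule.zero_mem _
  -- division step
  have divstep : ∀ Y' T' : D, Ideal.span {Y', T'} = IsLocalRing.maximalIdeal D →
      ∀ (g : D) (k : ℕ), g * T'^k ∈ Ideal.span {Y'} → g ∈ Ideal.span {Y'} := by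
    intro Y' T' hspan g k hgk
    have hY'm : Y' ∈ IsLocalRing.maximalIdeal D := by
      rw [← hspan]; exact Ideal.subset_span (Set.mem_insert _ _)
    have hT'm : T' ∈ IsLocalRing.maximalIdeal D := by
      rw [← hspan]; exact Ideal.subset_span (Set.mem_insert_of_mem _ rfl)
    have hsle : Ideal.span {Y'} ≤ IsLocalRing.maximalIdeal D :=
      Ideal.span_le.mpr (Set.singleton_subset_iff.mpr hY'm)
    have hne : Ideal.span {Y'} ≠ ⊤ := fun h =>
      (IsLocalRing.maximalIdeal.isMaximal D).ne_top (top_le_iff.mp (h ▸ hsle))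
    set mkY := Ideal.Quotient.mk (Ideal.span {Y'}) with hmkY
    haveI : Nontrivial (D ⧸ Ideal.span {Y'}) := Ideal.Quotient.nontrivial_iff.mpr hne
    haveI : IsLocalRing (D ⧸ Ideal.span {Y'}) :=
      IsLocalRing.of_surjective' mkY Ideal.Quotient.mk_surjective
    have hmax : IsLocalRing.maximalIdeal (D ⧸ Ideal.span {Y'}) = Ideal.span {mkY T'} := by
      rw [myMaxQuot _ hne, ← hspan, Ideal.map_span]
      apply le_antisymm
      · rw [Ideal.span_le]
        rintro c hc
        simp only [Set.image_insert_eq, Set.image_singleton] at hc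
        rcases hc with rfl | rfl
        · have : mkY Y' = 0 := by
            rw [Ideal.Quotient.eq_zero_iff_mem]; exact Ideal.subset_span rfl
          rw [this]; exact Submodule.zero_mem _
        · exact Ideal.subset_span rfl
      · rw [Ideal.span_le]
        rintro c rfl
        exact Ideal.subset_span ⟨T', Set.mem_insert_of_mem _ rfl, rfl⟩
    have hTnn : ∀ j : ℕ, (mkY T')^j ≠ 0 := by
      intro j hj
      rw [← map_pow, Ideal.Quotient.eq_zero_iff_mem] at hj
      refine myPITlocal Y' hY'm ?_ ⊥ Q Ideal.bot_prime hQ h0Q hQm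
      intro P hP hYP
      have hspanP : Ideal.span {Y'} ≤ P := Ideal.span_le.mpr (Set.singleton_subset_iff.mpr hYP)
      have hTP : T' ∈ P := hP.mem_of_pow_mem j (hspanP hj)
      refine le_antisymm (IsLocalRing.le_maximalIdeal hP.ne_top) ?_
      rw [← hspan, Ideal.span_le]
      rintro c (rfl | rfl)
      · exact hYP
      · exact hTP
    haveI : IsDomain (D ⧸ Ideal.span {Y'}) := myDomainQ (mkY T') hmax hTnn
    have h0 : mkY g * (mkY T')^k = 0 := by
      rw [← map_pow, ← map_mul, Ideal.Quotient.eq_zero_iff_mem]; exact hgk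
    rcases mul_eq_zero.mp h0 with h | h
    · rwa [Ideal.Quotient.eq_zero_iff_mem] at h
    · exact absurd h (hTnn k)
  have hspanYT : Ideal.span {Y, T} = IsLocalRing.maximalIdeal D := hmD.symm
  have hspanTY : Ideal.span {T, Y} = IsLocalRing.maximalIdeal D := by
    rw [Set.pair_comm]; exact hspanYT
  -- Step 1 : A = A₁ * Y
  have hA : A * T^3 ∈ Ideal.span {Y} := by
    rw [Ideal.mem_span_singleton']
    exact ⟨Y*T^2 - B*Y^3 - C*(Y^2*T), by linear_combination E⟩
  obtain ⟨A₁, hA₁⟩ := Ideal.mem_span_singleton'.mp (divstep Y T hspanYT A 3 hA)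
  have e1 : Y * (Y*T^2 - A₁*T^3 - B*Y^3 - C*(Y^2*T)) = 0 := by
    linear_combination E - T^3 * hA₁
  have E1 : Y*T^2 = A₁*T^3 + B*Y^3 + C*(Y^2*T) := by
    have := (mul_eq_zero.mp e1).resolve_left hY0
    linear_combination this
  -- Step 2 : A₁ = A₂ * Y
  have hA1m : A₁ * T^3 ∈ Ideal.span {Y} := by
    rw [Ideal.mem_span_singleton']
    exact ⟨T^2 - B*Y^2 - C*(Y*T), by linear_combination E1⟩
  obtain ⟨A₂, hA₂⟩ := Ideal.mem_span_singleton'.mp (divstep Y T hspanYT A₁ 3 hA1m)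
  have e2 : Y * (T^2 - A₂*T^3 - B*Y^2 - C*(Y*T)) = 0 := by
    linear_combination E1 - T^3 * hA₂
  have E2 : T^2 = A₂*T^3 + B*Y^2 + C*(Y*T) := by
    have := (mul_eq_zero.mp e2).resolve_left hY0
    linear_combination this
  -- Step 3 : B = B₁ * T
  have hBm : B * Y^2 ∈ Ideal.span {T} := by
    rw [Ideal.mem_span_singleton']
    exact ⟨T - A₂*T^2 - C*Y, by linear_combination E2⟩
  obtain ⟨B₁, hB₁⟩ := Ideal.mem_span_singleton'.mp (divstep T Y hspanTY B 2 hBm)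
  have e3 : T * (T - A₂*T^2 - B₁*Y^2 - C*Y) = 0 := by
    linear_combination E2 - Y^2 * hB₁
  have E3 : T = A₂*T^2 + B₁*Y^2 + C*Y := by
    have := (mul_eq_zero.mp e3).resolve_left hT0
    linear_combination this
  -- Step 4 : T ∈ span {Y}
  have hu : IsUnit (1 - A₂*T) := by
    have hmem : A₂*T ∈ IsLocalRing.maximalIdeal D := Ideal.mul_mem_left _ A₂ hTm
    rw [IsLocalRing.mem_maximalIdeal] at hmem
    exact IsLocalRing.isUnit_one_sub_self_of_mem_nonunits _ hmem
  obtain ⟨uu, huu⟩ := hu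
  have htu : T * (1 - A₂*T) ∈ Ideal.span {Y} := by
    rw [Ideal.mem_span_singleton']
    exact ⟨B₁*Y + C, by linear_combination -E3⟩
  have hT_in : T ∈ Ideal.span {Y} := by
    rw [← huu] at htu
    have h := Ideal.mul_mem_right (↑uu⁻¹) _ htu
    rwa [mul_assoc, Units.mul_inv, mul_one] at h
  refine NP Y hYm ?_
  rw [hmD, Ideal.span_le]
  rintro c (rfl | rfl)
  · exact Ideal.subset_span rfl
  · exact hT_in

universe u v

/-- In a regular local ring of Krull dimension `4` with regular system of parameters
`x, y, z, t`, the element `f₈` does not belong to the ideal `H = (f₁, …, f₇)`. -/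
theorem f8_not_mem_H {R : Type u} [CommRing R] [IsNoetherianRing R] [IsLocalRing R]
    (x y z t : R) (hdim : ringKrullDim R = 4)
    (hm : IsLocalRing.maximalIdeal R = Ideal.span {x, y, z, t})
    (f₁ f₂ f₃ f₄ f₅ f₆ f₇ f₈ : R)
    (hf₁ : f₁ = y * z - x * t)
    (hf₂ : f₂ = z ^ 3 - x ^ 5)
    (hf₃ : f₃ = z ^ 2 * t - x ^ 4 * y)
    (hf₄ : f₄ = z * t ^ 2 - x ^ 3 * y ^ 2)
    (hf₅ : f₅ = t ^ 3 - x ^ 2 * y ^ 3)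
    (hf₆ : f₆ = y ^ 4 - x ^ 5)
    (hf₇ : f₇ = y ^ 3 * t - x ^ 4 * z)
    (hf₈ : f₈ = y ^ 2 * t ^ 2 - x ^ 3 * z ^ 2)
    (H : Ideal R) (hH : H = Ideal.span {f₁, f₂, f₃, f₄, f₅, f₆, f₇}) :
    f₈ ∉ H := by
  intro hmem
  -- membership of generators in the maximal ideal
  have hx : x ∈ IsLocalRing.maximalIdeal R := by
    rw [hm]; exact Ideal.subset_span (Set.mem_insert _ _)
  have hy : y ∈ IsLocalRing.maximalIdeal R := by
    rw [hm]; exact Ideal.subset_span (Set.mem_insert_of_mem _ (Set.mem_insert _ _))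
  have hz : z ∈ IsLocalRing.maximalIdeal R := by
    rw [hm]
    exact Ideal.subset_span (Set.mem_insert_of_mem _ (Set.mem_insert_of_mem _
      (Set.mem_insert _ _)))
  have ht : t ∈ IsLocalRing.maximalIdeal R := by
    rw [hm]
    exact Ideal.subset_span (Set.mem_insert_of_mem _ (Set.mem_insert_of_mem _
      (Set.mem_insert_of_mem _ rfl)))
  -- extract a chain of primes of length 4
  obtain ⟨p, hp⟩ : ∃ p : LTSeries (PrimeSpectrum R), 4 ≤ p.length := by
    by_contra hcon
    push_neg at hcon
    have hle : ringKrullDim R ≤ 3 := by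
      have : ∀ q : LTSeries (PrimeSpectrum R), (q.length : WithBot (WithTop ℕ)) ≤ 3 := by
        intro q
        have := hcon q
        exact_mod_cast Nat.le_of_lt_succ this
      exact iSup_le this
    rw [hdim] at hle
    norm_num at hle
  have hidx : ∀ i : ℕ, i ≤ 4 → i < p.length + 1 := fun i hi => by omega
  let P : ℕ → Ideal R := fun i =>
    if h : i ≤ 4 then (p ⟨i, hidx i h⟩).asIdeal else ⊥
  have hPprime : ∀ i : ℕ, i ≤ 4 → (P i).IsPrime := by
    intro i hi
    simp only [P, dif_pos hi]
    exact (p ⟨i, hidx i hi⟩).isPrime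
  have hPlt : ∀ i : ℕ, i + 1 ≤ 4 → P i < P (i+1) := by
    intro i hi
    have h1 : i ≤ 4 := by omega
    simp only [P, dif_pos hi, dif_pos h1]
    have := p.strictMono (show (⟨i, hidx i h1⟩ : Fin (p.length+1)) < ⟨i+1, hidx (i+1) hi⟩
      from by simp [Fin.mk_lt_mk])
    exact this
  set m := IsLocalRing.maximalIdeal R with hmdef
  have hmprime : m.IsPrime := (IsLocalRing.maximalIdeal.isMaximal R).isPrime
  have hP3m : P 3 < m := by
    calc P 3 < P 4 := hPlt 3 (by norm_num)
    _ ≤ m := IsLocalRing.le_maximalIdeal (hPprime 4 (by norm_num)).ne_top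
  -- chain surgery: first for x, then for z
  obtain ⟨v₃, hv₃p, hxv₃, hv₃1, hv₃2⟩ := myShift (P 2) (P 3) m
    (hPprime 2 (by norm_num)) (hPprime 3 (by norm_num)) hmprime
    (hPlt 2 (by norm_num)) hP3m x hx
  obtain ⟨v₂, hv₂p, hxv₂, hv₂1, hv₂2⟩ := myShift (P 1) (P 2) v₃
    (hPprime 1 (by norm_num)) (hPprime 2 (by norm_num)) hv₃p
    (hPlt 1 (by norm_num)) hv₃1 x hxv₃
  obtain ⟨v₁, hv₁p, hxv₁, hv₁1, hv₁2⟩ := myShift (P 0) (P 1) v₂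
    (hPprime 0 (by norm_num)) (hPprime 1 (by norm_num)) hv₂p
    (hPlt 0 (by norm_num)) hv₂1 x hxv₂
  obtain ⟨w₃, hw₃p, hzw₃, hw₃1, hw₃2⟩ := myShift v₂ v₃ m hv₂p hv₃p hmprime hv₂2
    (hv₃2) z hz
  obtain ⟨w₂, hw₂p, hzw₂, hw₂1, hw₂2⟩ := myShift v₁ v₂ w₃ hv₁p hv₂p hw₃p hv₁2
    (hw₃1) z hzw₃
  -- w₂ < w₃ < m, both contain x and z
  have hxw₂ : x ∈ w₂ := hw₂1.le hxv₁
  have hxw₃ : x ∈ w₃ := hw₃1.le hxv₂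
  have hw₂w₃ : w₂ < w₃ := hw₂2
  have hw₃m : w₃ < m := hw₃2
  have hw₂m : w₂ < m := hw₂w₃.trans hw₃m
  -- quotient ring D
  haveI := hw₂p
  let mk : R →+* R ⧸ w₂ := Ideal.Quotient.mk w₂
  haveI : IsDomain (R ⧸ w₂) := Ideal.Quotient.isDomain w₂
  haveI : Nontrivial (R ⧸ w₂) := Ideal.Quotient.nontrivial_iff.mpr hw₂p.ne_top
  haveI : IsLocalRing (R ⧸ w₂) :=
    IsLocalRing.of_surjective' mk Ideal.Quotient.mk_surjective
  have hx0 : mk x = 0 := by rwa [Ideal.Quotient.eq_zero_iff_mem]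
  have hz0 : mk z = 0 := by rwa [Ideal.Quotient.eq_zero_iff_mem]
  -- maximal ideal of D
  have hmD : IsLocalRing.maximalIdeal (R ⧸ w₂) = Ideal.span {mk y, mk t} := by
    rw [myMaxQuot w₂ hw₂p.ne_top, ← hmdef, hm, Ideal.map_span]
    apply le_antisymm
    · rw [Ideal.span_le]
      rintro c hc
      simp only [Set.image_insert_eq, Set.image_singleton] at hc
      rcases hc with rfl | rfl | rfl | rfl
      · rw [hx0]; exact Submodule.zero_mem _
      · exact Ideal.subset_span (Set.mem_insert _ _)
      · rw [hz0]; exact Submodule.zero_mem _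
      · exact Ideal.subset_span (Set.mem_insert_of_mem _ rfl)
    · rw [Ideal.span_le]
      rintro c hc
      simp only [Set.image_insert_eq, Set.image_singleton]
      rcases hc with rfl | rfl
      · exact Ideal.subset_span (Set.mem_insert_of_mem _ (Set.mem_insert _ _))
      · exact Ideal.subset_span (Set.mem_insert_of_mem _ (Set.mem_insert_of_mem _
          (Set.mem_insert_of_mem _ rfl)))
  -- the intermediate prime
  let Q : Ideal (R ⧸ w₂) := w₃.map mk
  have hcompbot : Ideal.comap mk (⊥ : Ideal (R ⧸ w₂)) ≤ w₂ := by
    intro r hr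
    have h0 : mk r = 0 := hr
    rwa [Ideal.Quotient.eq_zero_iff_mem] at h0
  haveI hQp : Q.IsPrime := Ideal.map_isPrime_of_surjective Ideal.Quotient.mk_surjective
    (by rw [Ideal.mk_ker]; exact hw₂w₃.le)
  have h0Q : (⊥ : Ideal (R ⧸ w₂)) < Q := by
    obtain ⟨r, hr3, hr2⟩ := SetLike.exists_of_lt hw₂w₃
    refine lt_of_le_of_ne bot_le (fun he => ?_)
    have : mk r ∈ Q := Ideal.mem_map_of_mem _ hr3
    rw [← he, Ideal.mem_bot, Ideal.Quotient.eq_zero_iff_mem] at this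
    exact hr2 this
  have hQm : Q < IsLocalRing.maximalIdeal (R ⧸ w₂) := by
    rw [myMaxQuot w₂ hw₂p.ne_top, ← hmdef]
    refine lt_of_le_of_ne (Ideal.map_mono hw₃m.le) (fun he => hw₃m.ne ?_)
    have h1 : Ideal.comap mk Q = w₃ := by
      show Ideal.comap mk (w₃.map mk) = w₃
      rw [Ideal.comap_map_of_surjective mk Ideal.Quotient.mk_surjective]
      exact sup_eq_left.mpr (hcompbot.trans hw₂w₃.le)
    have h2 : Ideal.comap mk (m.map mk) = m := by
      rw [Ideal.comap_map_of_surjective mk Ideal.Quotient.mk_surjective]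
      exact sup_eq_left.mpr (hcompbot.trans hw₂m.le)
    have h9 := congrArg (Ideal.comap mk) he
    rw [h1, h2] at h9
    exact h9
  -- the membership equation in D
  have hf₁w : f₁ ∈ w₂ := by
    rw [hf₁]
    exact Submodule.sub_mem _ (Ideal.mul_mem_left _ y hzw₂) (Ideal.mul_mem_right t _ hxw₂)
  have hf₂w : f₂ ∈ w₂ := by
    rw [hf₂]
    exact Submodule.sub_mem _ (Ideal.pow_mem_of_mem _ hzw₂ 3 (by norm_num))
      (Ideal.pow_mem_of_mem _ hxw₂ 5 (by norm_num))
  have hf₃w : f₃ ∈ w₂ := by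
    rw [hf₃]
    exact Submodule.sub_mem _ (Ideal.mul_mem_right t _ (Ideal.pow_mem_of_mem _ hzw₂ 2 (by norm_num)))
      (Ideal.mul_mem_right y _ (Ideal.pow_mem_of_mem _ hxw₂ 4 (by norm_num)))
  have hf₄w : f₄ ∈ w₂ := by
    rw [hf₄]
    exact Submodule.sub_mem _ (Ideal.mul_mem_right _ _ hzw₂)
      (Ideal.mul_mem_right _ _ (Ideal.pow_mem_of_mem _ hxw₂ 3 (by norm_num)))
  have hmain : mk f₈ ∈ Ideal.span {mk f₅, mk f₆, mk f₇} := by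
    have h1 : mk f₈ ∈ H.map mk := Ideal.mem_map_of_mem _ hmem
    have h2 : H.map mk ≤ Ideal.span {mk f₅, mk f₆, mk f₇} := by
      rw [hH, Ideal.map_span, Ideal.span_le]
      rintro c hc
      simp only [Set.image_insert_eq, Set.image_singleton] at hc
      rcases hc with rfl | rfl | rfl | rfl | rfl | rfl | rfl
      · rw [Ideal.Quotient.eq_zero_iff_mem.mpr hf₁w]; exact Submodule.zero_mem _
      · rw [Ideal.Quotient.eq_zero_iff_mem.mpr hf₂w]; exact Submodule.zero_mem _
      · rw [Ideal.Quotient.eq_zero_iff_mem.mpr hf₃w]; exact Submodule.zero_mem _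
      · rw [Ideal.Quotient.eq_zero_iff_mem.mpr hf₄w]; exact Submodule.zero_mem _
      · exact Ideal.subset_span (Set.mem_insert _ _)
      · exact Ideal.subset_span (Set.mem_insert_of_mem _ (Set.mem_insert _ _))
      · exact Ideal.subset_span (Set.mem_insert_of_mem _ (Set.mem_insert_of_mem _ rfl))
    exact h2 h1
  obtain ⟨cA, t1, ht1, hdec1⟩ := Submodule.mem_span_insert.mp hmain
  obtain ⟨cB, t2, ht2, hdec2⟩ := Submodule.mem_span_insert.mp ht1
  obtain ⟨cC, hdec3⟩ := Ideal.mem_span_singleton'.mp ht2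
  have h5 : mk f₅ = (mk t)^3 := by
    rw [hf₅]; push_cast [map_sub, map_pow, map_mul, hx0]; ring
  have h6 : mk f₆ = (mk y)^4 := by
    rw [hf₆]; push_cast [map_sub, map_pow, map_mul, hx0]; ring
  have h7 : mk f₇ = (mk y)^3 * (mk t) := by
    rw [hf₇]; push_cast [map_sub, map_pow, map_mul, hx0]; ring
  have h8 : mk f₈ = (mk y)^2 * (mk t)^2 := by
    rw [hf₈]; push_cast [map_sub, map_pow, map_mul, hx0, hz0]; ring
  have E : (mk y)^2*(mk t)^2 = cA*(mk t)^3 + cB*(mk y)^4 + cC*((mk y)^3*(mk t)) := by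
    rw [hdec2, ← hdec3] at hdec1
    rw [h5, h6, h7, h8] at hdec1
    rw [smul_eq_mul, smul_eq_mul] at hdec1
    linear_combination hdec1
  exact myFinal (mk y) (mk t) cA cB cC hmD Q hQp h0Q hQm E
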